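/- Assume the forms S_n pre-converge to S. Then condition (iv) implies condition (iii). -/

import Mathlib

open MeasureTheory Filter Topology

noncomputable section

namespace Mosco

variable {E : Type*} [MeasurableSpace E]

/-- The inner product of two real-valued functions with respect to a measure,
`⟨φ, ψ⟩ = ∫ φ ψ dμ`. -/
def ip (μ : Measure E) (φ ψ : E → ℝ) : ℝ := ∫ x, φ x * ψ x ∂μ

/-- The framework of Section 2.1: mutually singular probability measures `ν n`, `n : ℕ`
(`ν 0` playing the role of the limit measure `ν`), such that `L²(E, ν 0)` is separable,
together with disjoint sets `En n` carrying `ν n`, and a linear subset `F = 𝓕 ⊆ 𝓓`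
which is dense in `L²(E, ν 0)`. -/
structure Frame (E : Type*) [MeasurableSpace E] where
  ν : ℕ → Measure E
  prob : ∀ n, IsProbabilityMeasure (ν n)
  singular : ∀ m n, m ≠ n → (ν m).MutuallySingular (ν n)
  separableL2 : TopologicalSpace.SeparableSpace (Lp ℝ 2 (ν 0))
  En : ℕ → Set E
  measEn : ∀ n, MeasurableSet (En n)
  disjEn : ∀ m n, m ≠ n → Disjoint (En m) (En n)
  nullEn : ∀ n, ν n (En n)ᶜ = 0
  F : Set (E → ℝ)
  F_measurable : ∀ φ ∈ F, Measurable φ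
  F_memL2 : ∀ φ ∈ F, ∀ n, MemLp φ 2 (ν n)
  F_tendsto : ∀ φ ∈ F, Tendsto (fun n => ip (ν n) φ φ) atTop (𝓝 (ip (ν 0) φ φ))
  F_linear : ∀ φ ∈ F, ∀ ψ ∈ F, ∀ a b : ℝ, (fun x => a * φ x + b * ψ x) ∈ F
  F_dense : ∀ f : E → ℝ, Measurable f → MemLp f 2 (ν 0) → ∀ ε : ℝ, 0 < ε →
    ∃ φ ∈ F, ip (ν 0) (fun x => f x - φ x) (fun x => f x - φ x) < ε

/-- The set `𝓓`: everywhere defined measurable functions lying in every `L²(E, ν n)`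
whose `ν n`-norms converge to the `ν 0`-norm. -/
def Frame.D (fr : Frame E) : Set (E → ℝ) :=
  {φ | Measurable φ ∧ (∀ n, MemLp φ 2 (fr.ν n)) ∧
    Tendsto (fun n => ip (fr.ν n) φ φ) atTop (𝓝 (ip (fr.ν 0) φ φ))}

/-- The set `𝓒`: elements of `𝓓` satisfying conditions (c1) and (c2). -/
def Frame.C (fr : Frame E) : Set (E → ℝ) :=
  {φ | φ ∈ fr.D ∧ (∀ n, 1 ≤ n → ∃ g ∈ fr.F, φ =ᵐ[fr.ν n] g) ∧
    ∀ ψ ∈ fr.F, Tendsto (fun n => ip (fr.ν n) φ ψ) atTop (𝓝 (ip (fr.ν 0) φ ψ))}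

/-- The set `𝓥` of multipliers mapping `𝓓` into `𝓓` and `𝓕` into `𝓕`. -/
def Frame.V (fr : Frame E) : Set (E → ℝ) :=
  {ψ | Measurable ψ ∧ (∀ n, MemLp ψ 2 (fr.ν n)) ∧
    (∀ σ ∈ fr.D, (fun x => σ x * ψ x) ∈ fr.D) ∧
    (∀ τ ∈ fr.F, (fun x => τ x * ψ x) ∈ fr.F)}

/-- `w`-convergence of a sequence `φs` (with `φs n` regarded as an element of
`L²(E, ν n)`) to `φ ∈ L²(E, ν 0)`. -/
def Frame.WConv (fr : Frame E) (φs : ℕ → E → ℝ) (φ : E → ℝ) : Prop :=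
  ∀ ψ ∈ fr.C, Tendsto (fun n => ip (fr.ν n) (φs n) ψ) atTop (𝓝 (ip (fr.ν 0) φ ψ))

/-- `s`-convergence: `w`-convergence together with convergence of the norms. -/
def Frame.SConv (fr : Frame E) (φs : ℕ → E → ℝ) (φ : E → ℝ) : Prop :=
  fr.WConv φs φ ∧
  Tendsto (fun n => ip (fr.ν n) (φs n) (φs n)) atTop (𝓝 (ip (fr.ν 0) φ φ))

open Classical

/-- The `L²(μ)`-class of a function (zero if the function is not square-integrable). -/
def toL2 (μ : Measure E) (φ : E → ℝ) : Lp ℝ 2 μ :=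
  if h : MemLp φ 2 μ then h.toLp φ else 0

/-- A strongly continuous semigroup of bounded linear operators on `L²(E, μ)`. -/
structure Semigroup2 {E : Type*} [MeasurableSpace E] (μ : Measure E) where
  T : ℝ → Lp ℝ 2 μ →L[ℝ] Lp ℝ 2 μ
  T_zero : T 0 = ContinuousLinearMap.id ℝ (Lp ℝ 2 μ)
  T_add : ∀ s t : ℝ, 0 ≤ s → 0 ≤ t → T (s + t) = (T s).comp (T t)
  strongCont : ∀ f : Lp ℝ 2 μ, Tendsto (fun t => T t f) (𝓝[≥] (0:ℝ)) (𝓝 f)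

namespace Semigroup2

variable {μ : Measure E}

/-- The semigroup is a contraction semigroup. -/
def IsContraction (sg : Semigroup2 μ) : Prop := ∀ t : ℝ, 0 ≤ t → ‖sg.T t‖ ≤ 1

/-- The adjoint (dual) semigroup `T'`. -/
def dual (sg : Semigroup2 μ) (t : ℝ) : Lp ℝ 2 μ →L[ℝ] Lp ℝ 2 μ :=
  ContinuousLinearMap.adjoint (sg.T t)

/-- Membership in the domain `D(A)` of the generator. -/
def memDom (sg : Semigroup2 μ) (f : Lp ℝ 2 μ) : Prop :=
  ∃ g : Lp ℝ 2 μ, Tendsto (fun t : ℝ => t⁻¹ • (sg.T t f - f)) (𝓝[>] (0:ℝ)) (𝓝 g)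

/-- The generator `A` (zero off its domain). -/
def gen (sg : Semigroup2 μ) (f : Lp ℝ 2 μ) : Lp ℝ 2 μ :=
  if h : sg.memDom f then Exists.choose h else 0

/-- Membership in the domain `D(A')` of the adjoint generator. -/
def memDom' (sg : Semigroup2 μ) (f : Lp ℝ 2 μ) : Prop :=
  ∃ g : Lp ℝ 2 μ, Tendsto (fun t : ℝ => t⁻¹ • (sg.dual t f - f)) (𝓝[>] (0:ℝ)) (𝓝 g)

/-- The adjoint generator `A'` (zero off its domain). -/
def gen' (sg : Semigroup2 μ) (f : Lp ℝ 2 μ) : Lp ℝ 2 μ :=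
  if h : sg.memDom' f then Exists.choose h else 0

/-- The resolvent `G_β = (β - A)⁻¹ = ∫_0^∞ e^{-βt} T_t dt`. -/
def res (sg : Semigroup2 μ) (β : ℝ) (f : Lp ℝ 2 μ) : Lp ℝ 2 μ :=
  ∫ t in Set.Ioi (0:ℝ), Real.exp (-β * t) • sg.T t f

/-- The adjoint resolvent `G'_β`. -/
def res' (sg : Semigroup2 μ) (β : ℝ) (f : Lp ℝ 2 μ) : Lp ℝ 2 μ :=
  ∫ t in Set.Ioi (0:ℝ), Real.exp (-β * t) • sg.dual t f

/-- `u ∈ D(A) = D(S)`, at the level of functions. -/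
def memD (sg : Semigroup2 μ) (u : E → ℝ) : Prop := sg.memDom (toL2 μ u)

/-- `u ∈ D(A')`, at the level of functions. -/
def memD' (sg : Semigroup2 μ) (u : E → ℝ) : Prop := sg.memDom' (toL2 μ u)

/-- `A u`, at the level of functions. -/
def Af (sg : Semigroup2 μ) (u : E → ℝ) : E → ℝ := sg.gen (toL2 μ u)

/-- `A' u`, at the level of functions. -/
def Af' (sg : Semigroup2 μ) (u : E → ℝ) : E → ℝ := sg.gen' (toL2 μ u)

/-- `G_β u`, at the level of functions. -/
def Res (sg : Semigroup2 μ) (β : ℝ) (u : E → ℝ) : E → ℝ := sg.res β (toL2 μ u)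

/-- `G'_β u`, at the level of functions. -/
def Res' (sg : Semigroup2 μ) (β : ℝ) (u : E → ℝ) : E → ℝ := sg.res' β (toL2 μ u)

/-- `T_t u`, at the level of functions. -/
def Tf (sg : Semigroup2 μ) (t : ℝ) (u : E → ℝ) : E → ℝ := sg.T t (toL2 μ u)

/-- `T'_t u`, at the level of functions. -/
def Tf' (sg : Semigroup2 μ) (t : ℝ) (u : E → ℝ) : E → ℝ := sg.dual t (toL2 μ u)

/-- The bilinear form `S(u, v) = ⟨-A u, v⟩` associated with the semigroup. -/
def S (sg : Semigroup2 μ) (u v : E → ℝ) : ℝ := ip μ (fun x => -(sg.Af u x)) v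

/-- `S_β(u, v) = β ⟨u, v⟩ + S(u, v)`. -/
def Sb (sg : Semigroup2 μ) (β : ℝ) (u v : E → ℝ) : ℝ := β * ip μ u v + sg.S u v

end Semigroup2

/-- Definition 2.4 (i) and (ii): the forms `S n` pre-converge to `S 0`.
Here `sg n` is the semigroup on `L²(E, ν n)` and `sg 0` the limiting one. -/
def PreConv (fr : Frame E) (sg : ∀ n, Semigroup2 (fr.ν n)) : Prop :=
  (∀ φ : E → ℝ, Measurable φ → MemLp φ 2 (fr.ν 0) →
    ∀ nk : ℕ → ℕ, StrictMono nk →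
    ∀ φk : ℕ → E → ℝ, (∀ k, φk k ∈ fr.C ∧ (sg (nk k)).memD (φk k)) →
    (∀ ψ ∈ fr.C, Tendsto (fun k => ip (fr.ν (nk k)) (φk k) ψ)
      atTop (𝓝 (ip (fr.ν 0) φ ψ))) →
    (∃ M : ℝ, ∀ k, ip (fr.ν (nk k)) ((sg (nk k)).Af (φk k)) ((sg (nk k)).Af (φk k)) ≤ M) →
    (sg 0).memD φ ∧
      (sg 0).S φ φ ≤ liminf (fun k => (sg (nk k)).S (φk k) (φk k)) atTop) ∧
  (∀ ψ : E → ℝ, Measurable ψ → MemLp ψ 2 (fr.ν 0) → (sg 0).memD ψ →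
    ∃ ψs : ℕ → E → ℝ, (∀ n, ψs n ∈ fr.C ∧ (sg n).memD (ψs n)) ∧
      fr.SConv ψs ψ ∧
      (∃ M : ℝ, ∀ n, ip (fr.ν n) ((sg n).Af (ψs n)) ((sg n).Af (ψs n)) ≤ M) ∧
      limsup (fun n => (sg n).S (ψs n) (ψs n)) atTop ≤ (sg 0).S ψ ψ)

/-- Condition (iii) of Definition 2.4. -/
def CondIII (fr : Frame E) (sg : ∀ n, Semigroup2 (fr.ν n)) : Prop :=
  ∀ β : ℝ, 0 < β →
  ∀ u : E → ℝ, Measurable u → MemLp u 2 (fr.ν 0) → (sg 0).memD u →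
  ∀ us : ℕ → E → ℝ,
    (∀ n, us n ∈ fr.C ∧ (sg n).memD (us n) ∧ ∃ c ∈ fr.C, (sg n).Af (us n) =ᵐ[fr.ν n] c) →
    (∃ w : E → ℝ, Measurable w ∧ MemLp w 2 (fr.ν 0) ∧ fr.WConv us w) →
    (∃ M : ℝ, ∀ n, ip (fr.ν n) ((sg n).Af (us n)) ((sg n).Af (us n)) ≤ M) →
    (∀ ψ ∈ fr.C, ∀ ψs : ℕ → E → ℝ, (∀ n, ψs n ∈ fr.C) → fr.SConv ψs ψ →
      Tendsto (fun n => (sg n).Sb β (us n) (ψs n)) atTop (𝓝 ((sg 0).Sb β u ψ))) →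
    ∀ ψ : E → ℝ, Measurable ψ → MemLp ψ 2 (fr.ν 0) → (sg 0).memD ψ →
    ∀ ψs : ℕ → E → ℝ, (∀ n, ψs n ∈ fr.C ∧ (sg n).memD (ψs n)) → fr.SConv ψs ψ →
      (∃ M : ℝ, ∀ n, ip (fr.ν n) ((sg n).Af (ψs n)) ((sg n).Af (ψs n)) ≤ M) →
      limsup (fun n => (sg n).S (ψs n) (ψs n)) atTop ≤ (sg 0).S ψ ψ →
      Tendsto (fun n => (sg n).Sb β (ψs n) (us n)) atTop (𝓝 ((sg 0).Sb β ψ u))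

/-- Condition (iv) of Lemma 2.6. -/
def CondIV (fr : Frame E) (sg : ∀ n, Semigroup2 (fr.ν n)) : Prop :=
  ∀ β : ℝ, 0 < β →
  ∀ u : E → ℝ, Measurable u → MemLp u 2 (fr.ν 0) → (sg 0).memD u →
  ∀ us : ℕ → E → ℝ,
    (∀ n, us n ∈ fr.C ∧ (sg n).memD (us n) ∧ ∃ c ∈ fr.C, (sg n).Af (us n) =ᵐ[fr.ν n] c) →
    (∃ w : E → ℝ, Measurable w ∧ MemLp w 2 (fr.ν 0) ∧ fr.WConv us w) →
    (∃ M : ℝ, ∀ n, ip (fr.ν n) ((sg n).Af (us n)) ((sg n).Af (us n)) ≤ M) →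
    fr.WConv (fun n x => β * us n x - (sg n).Af (us n) x)
      (fun x => β * u x - (sg 0).Af u x) →
    fr.WConv us u

/-- The forms converge: pre-convergence together with condition (iii). -/
def Conv (fr : Frame E) (sg : ∀ n, Semigroup2 (fr.ν n)) : Prop :=
  PreConv fr sg ∧ CondIII fr sg

/-- Condition (c3): resolvents and adjoint resolvents of elements of `𝓒`
coincide a.e. with elements of `𝓒`. -/
def CondC3 (fr : Frame E) (sg : ∀ n, Semigroup2 (fr.ν n)) : Prop :=
  ∀ g ∈ fr.C, ∀ β : ℝ, 0 < β →
    (∃ u ∈ fr.C, (sg 0).Res β g =ᵐ[fr.ν 0] u) ∧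
    (∀ n, 1 ≤ n → ∃ u ∈ fr.C, (sg n).Res β g =ᵐ[fr.ν n] u) ∧
    (∃ u ∈ fr.C, (sg 0).Res' β g =ᵐ[fr.ν 0] u) ∧
    (∀ n, 1 ≤ n → ∃ u ∈ fr.C, (sg n).Res' β g =ᵐ[fr.ν n] u)

/-- Condition (c4): `D(S) ⊆ 𝓒` and `A(D(S)) ⊆ 𝓒`, up to `ν 0`-a.e. equality. -/
def CondC4 (fr : Frame E) (sg : ∀ n, Semigroup2 (fr.ν n)) : Prop :=
  ∀ φ : E → ℝ, Measurable φ → MemLp φ 2 (fr.ν 0) → (sg 0).memD φ →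
    (∃ u ∈ fr.C, φ =ᵐ[fr.ν 0] u) ∧ (∃ u ∈ fr.C, (sg 0).Af φ =ᵐ[fr.ν 0] u)

/-- Condition (c5): semigroups and adjoint semigroups applied to elements of `𝓒`
coincide a.e. with elements of `𝓒`. -/
def CondC5 (fr : Frame E) (sg : ∀ n, Semigroup2 (fr.ν n)) : Prop :=
  ∀ g ∈ fr.C, ∀ t : ℝ, 0 ≤ t →
    (∃ u ∈ fr.C, (sg 0).Tf t g =ᵐ[fr.ν 0] u) ∧
    (∀ n, 1 ≤ n → ∃ u ∈ fr.C, (sg n).Tf t g =ᵐ[fr.ν n] u) ∧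
    (∃ u ∈ fr.C, (sg 0).Tf' t g =ᵐ[fr.ν 0] u) ∧
    (∀ n, 1 ≤ n → ∃ u ∈ fr.C, (sg n).Tf' t g =ᵐ[fr.ν n] u)

/-! ### Auxiliary lemmas -/

section IpLemmas

variable {μ : Measure E} {f g a b v : E → ℝ}

lemma toL2_eq (hf : MemLp f 2 μ) : toL2 μ f = hf.toLp f := dif_pos hf

lemma toL2_coe (f : Lp ℝ 2 μ) : toL2 μ ⇑f = f := by
  rw [toL2_eq (Lp.memLp f)]; exact Lp.toLp_coeFn f (Lp.memLp f)

lemma ip_inner (hf : MemLp f 2 μ) (hg : MemLp g 2 μ) :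
    ip μ f g = (inner ℝ (toL2 μ f) (toL2 μ g) : ℝ) := by
  simp only [ip]
  rw [toL2_eq hf, toL2_eq hg, MeasureTheory.L2.inner_def]
  apply integral_congr_ae
  filter_upwards [hf.coeFn_toLp, hg.coeFn_toLp] with x h1 h2
  rw [h1, h2]; simp only [Real.inner_apply]

lemma ip_coe (f g : Lp ℝ 2 μ) : ip μ ⇑f ⇑g = (inner ℝ f g : ℝ) := by
  rw [ip_inner (Lp.memLp f) (Lp.memLp g), toL2_coe, toL2_coe]

lemma ip_comm : ip μ f g = ip μ g f :=
  integral_congr_ae (Filter.Eventually.of_forall fun x => mul_comm _ _)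

lemma ip_congr_left (h : f =ᵐ[μ] g) : ip μ f v = ip μ g v :=
  integral_congr_ae (h.mono fun x hx => by dsimp only; rw [hx])

lemma ip_congr_right (h : f =ᵐ[μ] g) : ip μ v f = ip μ v g :=
  integral_congr_ae (h.mono fun x hx => by dsimp only; rw [hx])

lemma ip_self_nonneg (hf : MemLp f 2 μ) : 0 ≤ ip μ f f := by
  rw [ip_inner hf hf]; exact real_inner_self_nonneg

lemma sqrt_ip_self (hf : MemLp f 2 μ) : Real.sqrt (ip μ f f) = ‖toL2 μ f‖ := by
  rw [ip_inner hf hf, real_inner_self_eq_norm_sq]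
  exact Real.sqrt_sq (norm_nonneg _)

lemma abs_ip_le (hf : MemLp f 2 μ) (hg : MemLp g 2 μ) :
    |ip μ f g| ≤ Real.sqrt (ip μ f f) * Real.sqrt (ip μ g g) := by
  rw [ip_inner hf hg, sqrt_ip_self hf, sqrt_ip_self hg]
  exact abs_real_inner_le_norm _ _

lemma integrable_mul_L2 (ha : MemLp a 2 μ) (hv : MemLp v 2 μ) :
    Integrable (fun x => a x * v x) μ := by
  have h := MeasureTheory.L2.integrable_inner (𝕜 := ℝ) (ha.toLp a) (hv.toLp v)
  refine h.congr ?_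
  filter_upwards [ha.coeFn_toLp, hv.coeFn_toLp] with x h1 h2
  rw [h1, h2]; simp only [Real.inner_apply]

lemma ip_smul_add_l (ha : MemLp a 2 μ) (hb : MemLp b 2 μ) (hv : MemLp v 2 μ) (s : ℝ) :
    ip μ (fun x => s * a x + b x) v = s * ip μ a v + ip μ b v := by
  have hav := integrable_mul_L2 ha hv
  have hbv := integrable_mul_L2 hb hv
  simp only [ip]
  rw [show (fun x => (s * a x + b x) * v x) = fun x => s * (a x * v x) + b x * v x from
    funext fun x => by ring]
  rw [integral_add (hav.const_mul s) hbv, integral_const_mul]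

lemma ip_smul_add_r (ha : MemLp a 2 μ) (hb : MemLp b 2 μ) (hv : MemLp v 2 μ) (s : ℝ) :
    ip μ v (fun x => s * a x + b x) = s * ip μ v a + ip μ v b := by
  rw [ip_comm, ip_smul_add_l ha hb hv, ip_comm (f := a) (g := v), ip_comm (f := b) (g := v)]

lemma ip_sub_l (ha : MemLp a 2 μ) (hb : MemLp b 2 μ) (hv : MemLp v 2 μ) :
    ip μ (fun x => a x - b x) v = ip μ a v - ip μ b v := by
  have h := ip_smul_add_l hb ha hv (-1)
  rw [show (fun x => a x - b x) = fun x => (-1) * b x + a x from funext fun x => by ring, h]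
  ring

lemma ip_sub_r (ha : MemLp a 2 μ) (hb : MemLp b 2 μ) (hv : MemLp v 2 μ) :
    ip μ v (fun x => a x - b x) = ip μ v a - ip μ v b := by
  rw [ip_comm, ip_sub_l ha hb hv, ip_comm (f := a) (g := v), ip_comm (f := b) (g := v)]

lemma ip_neg_l : ip μ (fun x => -(a x)) v = -ip μ a v := by
  simp only [ip]
  rw [show (fun x => -(a x) * v x) = fun x => -(a x * v x) from funext fun x => by ring,
    integral_neg]

lemma ip_smul_l (s : ℝ) : ip μ (fun x => s * a x) v = s * ip μ a v := by
  simp only [ip]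
  rw [show (fun x => (s * a x) * v x) = fun x => s * (a x * v x) from funext fun x => by ring,
    integral_const_mul]

lemma ip_smul_r (s : ℝ) : ip μ v (fun x => s * a x) = s * ip μ v a := by
  rw [ip_comm, ip_smul_l, ip_comm (f := a) (g := v)]

lemma ip_sub_expand (hf : MemLp f 2 μ) (hg : MemLp g 2 μ) :
    ip μ (fun x => f x - g x) (fun x => f x - g x)
      = ip μ f f - 2 * ip μ f g + ip μ g g := by
  have hfg : MemLp (fun x => f x - g x) 2 μ := by
    have := hf.sub hg; exact this
  rw [ip_sub_l hf hg hfg, ip_sub_r hf hg hf, ip_sub_r hf hg hg,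
    ip_comm (f := g) (g := f)]
  ring

lemma ip_smul_add_self (ha : MemLp a 2 μ) (hb : MemLp b 2 μ) (s : ℝ) :
    ip μ (fun x => s * a x + b x) (fun x => s * a x + b x)
      = s ^ 2 * ip μ a a + 2 * s * ip μ a b + ip μ b b := by
  have hc : MemLp (fun x => s * a x + b x) 2 μ := (ha.const_mul s).add hb
  rw [ip_smul_add_l ha hb hc s, ip_smul_add_r ha hb ha s, ip_smul_add_r ha hb hb s,
    ip_comm (f := b) (g := a)]
  ring

lemma ip_comb_self (ha : MemLp a 2 μ) (hb : MemLp b 2 μ) (s t : ℝ) :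
    ip μ (fun x => s * a x + t * b x) (fun x => s * a x + t * b x)
      = s ^ 2 * ip μ a a + 2 * (s * t) * ip μ a b + t ^ 2 * ip μ b b := by
  have hb' : MemLp (fun x => t * b x) 2 μ := hb.const_mul t
  rw [ip_smul_add_self ha hb' s, ip_smul_r (v := a) t,
    show ip μ (fun x => t * b x) (fun x => t * b x) = t * ip μ b (fun x => t * b x) from
      ip_smul_l t, ip_smul_r (v := b) t]
  ring

end IpLemmas

namespace Semigroup2

variable {μ : Measure E} (sg : Semigroup2 μ)

lemma gen_spec {f : Lp ℝ 2 μ} (h : sg.memDom f) :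
    Tendsto (fun t : ℝ => t⁻¹ • (sg.T t f - f)) (𝓝[>] (0:ℝ)) (𝓝 (sg.gen f)) := by
  rw [gen, dif_pos h]; exact h.choose_spec

lemma quot_comb (s : ℝ) (f g : Lp ℝ 2 μ) (t : ℝ) :
    t⁻¹ • (sg.T t (s • f + g) - (s • f + g))
      = s • (t⁻¹ • (sg.T t f - f)) + t⁻¹ • (sg.T t g - g) := by
  have h : sg.T t (s • f + g) = s • sg.T t f + sg.T t g := by
    rw [map_add, _root_.map_smul]
  rw [h]
  module

lemma memDom_comb {f g : Lp ℝ 2 μ} (hf : sg.memDom f) (hg : sg.memDom g) (s : ℝ) :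
    sg.memDom (s • f + g) := by
  refine ⟨s • sg.gen f + sg.gen g, ?_⟩
  have h := Filter.Tendsto.add ((sg.gen_spec hf).const_smul s) (sg.gen_spec hg)
  refine h.congr fun t => ?_
  rw [← sg.quot_comb s f g t]

lemma gen_comb {f g : Lp ℝ 2 μ} (hf : sg.memDom f) (hg : sg.memDom g) (s : ℝ) :
    sg.gen (s • f + g) = s • sg.gen f + sg.gen g := by
  have h := Filter.Tendsto.add ((sg.gen_spec hf).const_smul s) (sg.gen_spec hg)
  have h' := h.congr fun t => (sg.quot_comb s f g t).symm
  exact tendsto_nhds_unique (sg.gen_spec (sg.memDom_comb hf hg s)) h'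

lemma memℒp_Af (u : E → ℝ) : MemLp (sg.Af u) 2 μ := Lp.memLp _

lemma S_eq_neg_ip {u v : E → ℝ} : sg.S u v = -ip μ (sg.Af u) v := by
  rw [Semigroup2.S, ip_neg_l]

lemma memD_comb {a b : E → ℝ} (ha : MemLp a 2 μ) (hb : MemLp b 2 μ)
    (hda : sg.memD a) (hdb : sg.memD b) (s : ℝ) :
    sg.memD (fun x => s * a x + b x) := by
  have he : toL2 μ (fun x => s * a x + b x) = s • toL2 μ a + toL2 μ b := by
    have h1 : MemLp (s • a) 2 μ := ha.const_smul s
    have he' : (fun x => s * a x + b x) = s • a + b := rfl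
    rw [he', toL2_eq ha, toL2_eq hb, toL2_eq (h1.add hb), MemLp.toLp_add h1 hb,
      MemLp.toLp_const_smul s ha]
  rw [Semigroup2.memD, he]
  exact sg.memDom_comb hda hdb s

lemma Af_comb {a b : E → ℝ} (ha : MemLp a 2 μ) (hb : MemLp b 2 μ)
    (hda : sg.memD a) (hdb : sg.memD b) (s : ℝ) :
    sg.Af (fun x => s * a x + b x) =ᵐ[μ] fun x => s * sg.Af a x + sg.Af b x := by
  have he : toL2 μ (fun x => s * a x + b x) = s • toL2 μ a + toL2 μ b := by
    have h1 : MemLp (s • a) 2 μ := ha.const_smul s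
    have he' : (fun x => s * a x + b x) = s • a + b := rfl
    rw [he', toL2_eq ha, toL2_eq hb, toL2_eq (h1.add hb), MemLp.toLp_add h1 hb,
      MemLp.toLp_const_smul s ha]
  rw [Semigroup2.Af, he, sg.gen_comb hda hdb s]
  filter_upwards [Lp.coeFn_add (s • sg.gen (toL2 μ a)) (sg.gen (toL2 μ b)),
    Lp.coeFn_smul s (sg.gen (toL2 μ a))] with x h1 h2
  rw [h1]
  simp only [Pi.add_apply, h2, Pi.smul_apply, smul_eq_mul]
  rfl

lemma Sb_eq_ip {u v : E → ℝ} (hu : MemLp u 2 μ) (hv : MemLp v 2 μ) (β : ℝ) :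
    sg.Sb β u v = ip μ (fun x => β * u x - sg.Af u x) v := by
  rw [Semigroup2.Sb, sg.S_eq_neg_ip, ip_sub_l (hu.const_mul β) (sg.memℒp_Af u) hv,
    ip_smul_l β]
  ring

end Semigroup2

section FrameLemmas

variable (fr : Frame E)

lemma Frame.memℒp_of_C {g : E → ℝ} (hg : g ∈ fr.C) (n : ℕ) : MemLp g 2 (fr.ν n) :=
  hg.1.2.1 n

lemma Frame.meas_of_C {g : E → ℝ} (hg : g ∈ fr.C) : Measurable g := hg.1.1

/-- Pairing lemma: a norm-bounded `w`-ish convergent sequence against an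
`s`-ish convergent sequence. -/
lemma pairGen {as ψs : ℕ → E → ℝ} {a ψ : E → ℝ} {B : ℝ}
    (hasm : ∀ n, MemLp (as n) 2 (fr.ν n)) (hB : ∀ n, ip (fr.ν n) (as n) (as n) ≤ B)
    (ha : MemLp a 2 (fr.ν 0))
    (hψm : Measurable ψ) (hψ : MemLp ψ 2 (fr.ν 0))
    (hψsm : ∀ n, MemLp (ψs n) 2 (fr.ν n))
    (h1 : ∀ χ ∈ fr.F, Tendsto (fun n => ip (fr.ν n) (as n) χ) atTop (𝓝 (ip (fr.ν 0) a χ)))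
    (h2 : ∀ χ ∈ fr.F, Tendsto
      (fun n => ip (fr.ν n) (fun x => ψs n x - χ x) (fun x => ψs n x - χ x)) atTop
      (𝓝 (ip (fr.ν 0) (fun x => ψ x - χ x) (fun x => ψ x - χ x)))) :
    Tendsto (fun n => ip (fr.ν n) (as n) (ψs n)) atTop (𝓝 (ip (fr.ν 0) a ψ)) := by
  rw [Metric.tendsto_atTop]
  intro ε hε
  set Ca : ℝ := Real.sqrt (ip (fr.ν 0) a a) with hCa
  have hCa0 : 0 ≤ Ca := Real.sqrt_nonneg _
  set B' : ℝ := max B 0 with hB'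
  have hB'0 : 0 ≤ B' := le_max_right _ _
  have hBle : ∀ n, ip (fr.ν n) (as n) (as n) ≤ B' := fun n => le_trans (hB n) (le_max_left _ _)
  set K : ℝ := Real.sqrt B' + Ca + 1 with hK
  have hK0 : 0 < K := by positivity
  set δ : ℝ := min (ε / 4) (ε / (4 * K)) with hδ
  have hδ0 : 0 < δ := lt_min (by positivity) (by positivity)
  obtain ⟨χ, hχF, hχclose⟩ := fr.F_dense ψ hψm hψ (δ ^ 2) (by positivity)
  have hχm : ∀ n, MemLp χ 2 (fr.ν n) := fr.F_memL2 χ hχF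
  have ev1 : ∀ᶠ n in atTop,
      ip (fr.ν n) (fun x => ψs n x - χ x) (fun x => ψs n x - χ x) < δ ^ 2 :=
    (h2 χ hχF).eventually_lt_const hχclose
  have ev2 : ∀ᶠ n in atTop, |ip (fr.ν n) (as n) χ - ip (fr.ν 0) a χ| < ε / 4 := by
    have := (h1 χ hχF)
    rw [Metric.tendsto_atTop] at this
    obtain ⟨N, hN⟩ := this (ε / 4) (by positivity)
    exact Filter.eventually_atTop.mpr ⟨N, fun n hn => by
      have := hN n hn; rwa [Real.dist_eq] at this⟩
  rw [← Filter.eventually_atTop]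
  filter_upwards [ev1, ev2] with n e1 e2
  have hsn : MemLp (fun x => ψs n x - χ x) 2 (fr.ν n) := (hψsm n).sub (hχm n)
  have hs0 : MemLp (fun x => ψ x - χ x) 2 (fr.ν 0) := hψ.sub (hχm 0)
  have d1 : ip (fr.ν n) (as n) (ψs n)
      = ip (fr.ν n) (as n) (fun x => ψs n x - χ x) + ip (fr.ν n) (as n) χ := by
    rw [ip_sub_r (hψsm n) (hχm n) (hasm n)]; ring
  have d2 : ip (fr.ν 0) a ψ
      = ip (fr.ν 0) a (fun x => ψ x - χ x) + ip (fr.ν 0) a χ := by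
    rw [ip_sub_r hψ (hχm 0) ha]; ring
  have b1 : |ip (fr.ν n) (as n) (fun x => ψs n x - χ x)| ≤ Real.sqrt B' * δ := by
    refine le_trans (abs_ip_le (hasm n) hsn) ?_
    have s1 : Real.sqrt (ip (fr.ν n) (as n) (as n)) ≤ Real.sqrt B' :=
      Real.sqrt_le_sqrt (hBle n)
    have s2 : Real.sqrt (ip (fr.ν n) (fun x => ψs n x - χ x) (fun x => ψs n x - χ x)) ≤ δ := by
      refine le_trans (Real.sqrt_le_sqrt (le_of_lt e1)) ?_
      rw [Real.sqrt_sq (le_of_lt hδ0)]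
    exact mul_le_mul s1 s2 (Real.sqrt_nonneg _) (Real.sqrt_nonneg _)
  have b2 : |ip (fr.ν 0) a (fun x => ψ x - χ x)| ≤ Ca * δ := by
    refine le_trans (abs_ip_le ha hs0) ?_
    have s2 : Real.sqrt (ip (fr.ν 0) (fun x => ψ x - χ x) (fun x => ψ x - χ x)) ≤ δ := by
      refine le_trans (Real.sqrt_le_sqrt (le_of_lt hχclose)) ?_
      rw [Real.sqrt_sq (le_of_lt hδ0)]
    exact mul_le_mul le_rfl s2 (Real.sqrt_nonneg _) hCa0
  have hKδ : (Real.sqrt B' + Ca) * δ ≤ ε / 4 := by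
    have hδK : δ ≤ ε / (4 * K) := min_le_right _ _
    have h1' : (Real.sqrt B' + Ca) * δ ≤ (Real.sqrt B' + Ca) * (ε / (4 * K)) :=
      mul_le_mul_of_nonneg_left hδK (by positivity)
    have h2' : Real.sqrt B' + Ca ≤ K := by rw [hK]; linarith
    have h3' : (Real.sqrt B' + Ca) * (ε / (4 * K)) ≤ K * (ε / (4 * K)) :=
      mul_le_mul_of_nonneg_right h2' (by positivity)
    have hKK : K * (ε / (4 * K)) = ε / 4 := by field_simp
    linarith
  set T1 : ℝ := ip (fr.ν n) (as n) (fun x => ψs n x - χ x) with hT1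
  set T2n : ℝ := ip (fr.ν n) (as n) χ with hT2n
  set T2 : ℝ := ip (fr.ν 0) a χ with hT2
  set T3 : ℝ := ip (fr.ν 0) a (fun x => ψ x - χ x) with hT3
  have hXY : ip (fr.ν n) (as n) (ψs n) - ip (fr.ν 0) a ψ = T1 + (T2n - T2) + -T3 := by
    rw [d1, d2]; ring
  have i2 := abs_add_le T1 (T2n - T2)
  have i1 := abs_add_le (T1 + (T2n - T2)) (-T3)
  rw [abs_neg] at i1
  rw [Real.dist_eq, hXY]
  have hb1' : |T1| ≤ Real.sqrt B' * δ := b1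
  have hb2' : |T3| ≤ Ca * δ := b2
  linarith

lemma bdd_of_tendsto {f : ℕ → ℝ} {a : ℝ} (h : Tendsto f atTop (𝓝 a)) : ∃ B, ∀ n, f n ≤ B := by
  obtain ⟨b, hb⟩ := h.bddAbove_range
  exact ⟨b, fun n => hb (Set.mem_range_self n)⟩

lemma sub_self_tendsto {ψs : ℕ → E → ℝ} {ψ χ : E → ℝ}
    (hψsm : ∀ n, MemLp (ψs n) 2 (fr.ν n)) (hψ : MemLp ψ 2 (fr.ν 0)) (hχ : χ ∈ fr.F)
    (hnorm : Tendsto (fun n => ip (fr.ν n) (ψs n) (ψs n)) atTop (𝓝 (ip (fr.ν 0) ψ ψ)))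
    (hpair : Tendsto (fun n => ip (fr.ν n) (ψs n) χ) atTop (𝓝 (ip (fr.ν 0) ψ χ))) :
    Tendsto (fun n => ip (fr.ν n) (fun x => ψs n x - χ x) (fun x => ψs n x - χ x)) atTop
      (𝓝 (ip (fr.ν 0) (fun x => ψ x - χ x) (fun x => ψ x - χ x))) := by
  have hχm := fr.F_memL2 χ hχ
  have hχt := fr.F_tendsto χ hχ
  have key := (hnorm.sub (hpair.const_mul 2)).add hχt
  have e : ∀ n, ip (fr.ν n) (fun x => ψs n x - χ x) (fun x => ψs n x - χ x)
      = ip (fr.ν n) (ψs n) (ψs n) - 2 * ip (fr.ν n) (ψs n) χ + ip (fr.ν n) χ χ :=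
    fun n => ip_sub_expand (hψsm n) (hχm n)
  rw [ip_sub_expand hψ (hχm 0)]
  exact key.congr fun n => (e n).symm

lemma pairC {g h : E → ℝ} (hg : g ∈ fr.C) (hh : h ∈ fr.C) :
    Tendsto (fun n => ip (fr.ν n) g h) atTop (𝓝 (ip (fr.ν 0) g h)) := by
  obtain ⟨B, hB⟩ := bdd_of_tendsto hg.1.2.2
  exact pairGen fr (fun n => hg.1.2.1 n) hB (hg.1.2.1 0) hh.1.1 (hh.1.2.1 0)
    (fun n => hh.1.2.1 n) (fun χ hχ => hg.2.2 χ hχ)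
    (fun χ hχ => sub_self_tendsto fr (fun n => hh.1.2.1 n) (hh.1.2.1 0) hχ hh.1.2.2
      (hh.2.2 χ hχ))

lemma C_comb {g h : E → ℝ} (hg : g ∈ fr.C) (hh : h ∈ fr.C) (s : ℝ) :
    (fun x => s * g x + h x) ∈ fr.C := by
  refine ⟨⟨(hg.1.1.const_mul s).add hh.1.1,
    fun n => ((hg.1.2.1 n).const_mul s).add (hh.1.2.1 n), ?_⟩, ?_, ?_⟩
  · have key := ((hg.1.2.2.const_mul (s ^ 2)).add ((pairC fr hg hh).const_mul (2 * s))).add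
      hh.1.2.2
    have e : ∀ n, ip (fr.ν n) (fun x => s * g x + h x) (fun x => s * g x + h x)
        = s ^ 2 * ip (fr.ν n) g g + 2 * s * ip (fr.ν n) g h + ip (fr.ν n) h h :=
      fun n => ip_smul_add_self (hg.1.2.1 n) (hh.1.2.1 n) s
    rw [e 0]
    exact key.congr fun n => (e n).symm
  · intro n hn
    obtain ⟨gg, hggF, hgge⟩ := hg.2.1 n hn
    obtain ⟨hhg, hhgF, hhge⟩ := hh.2.1 n hn
    refine ⟨fun x => s * gg x + 1 * hhg x, fr.F_linear gg hggF hhg hhgF s 1, ?_⟩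
    have efun : (fun x => s * gg x + 1 * hhg x) = fun x => s * gg x + hhg x :=
      funext fun x => by ring
    rw [efun]
    filter_upwards [hgge, hhge] with x e1 e2
    simp only [e1, e2]
  · intro χ hχ
    have e : ∀ n, ip (fr.ν n) (fun x => s * g x + h x) χ
        = s * ip (fr.ν n) g χ + ip (fr.ν n) h χ :=
      fun n => ip_smul_add_l (hg.1.2.1 n) (hh.1.2.1 n) (fr.F_memL2 χ hχ n) s
    have key := ((hg.2.2 χ hχ).const_mul s).add (hh.2.2 χ hχ)
    rw [e 0]
    exact key.congr fun n => (e n).symm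

lemma F_sub_C {φ : E → ℝ} (hφ : φ ∈ fr.F) : φ ∈ fr.C := by
  refine ⟨⟨fr.F_measurable φ hφ, fr.F_memL2 φ hφ, fr.F_tendsto φ hφ⟩,
    fun n _ => ⟨φ, hφ, Filter.EventuallyEq.rfl⟩, ?_⟩
  intro χ hχ
  have hplus := fr.F_tendsto _ (fr.F_linear φ hφ χ hχ 1 1)
  have hminus := fr.F_tendsto _ (fr.F_linear φ hφ χ hχ 1 (-1))
  have e : ∀ n, ip (fr.ν n) φ χ =
      (ip (fr.ν n) (fun x => 1 * φ x + 1 * χ x) (fun x => 1 * φ x + 1 * χ x) -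
       ip (fr.ν n) (fun x => 1 * φ x + (-1) * χ x) (fun x => 1 * φ x + (-1) * χ x)) / 4 := by
    intro n
    rw [ip_comb_self (fr.F_memL2 φ hφ n) (fr.F_memL2 χ hχ n) 1 1,
      ip_comb_self (fr.F_memL2 φ hφ n) (fr.F_memL2 χ hχ n) 1 (-1)]
    ring
  have key := (hplus.sub hminus).div_const 4
  rw [e 0]
  exact key.congr fun n => (e n).symm

lemma constS {g : E → ℝ} (hg : g ∈ fr.C) : fr.SConv (fun _ => g) g :=
  ⟨fun χ hχ => pairC fr hg hχ, pairC fr hg hg⟩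

lemma bddW {φs : ℕ → E → ℝ} {φ : E → ℝ} (hφs : ∀ n, φs n ∈ fr.C)
    (hw : fr.WConv φs φ) : ∃ B : ℝ, ∀ n, ip (fr.ν n) (φs n) (φs n) ≤ B := by
  by_contra hcon
  push_neg at hcon
  set v : ℕ → ℝ := fun n => ip (fr.ν n) (φs n) (φs n) with hv
  have key : ∀ (m : ℕ) (B : ℝ), ∃ n, m ≤ n ∧ B < v n := by
    intro m B
    by_contra hk
    push_neg at hk
    obtain ⟨c, hc⟩ := (Set.finite_range fun i : Fin m => v i).bddAbove
    obtain ⟨n, hn⟩ := hcon (max B c)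
    rcases le_or_gt m n with hmn | hmn
    · exact absurd (hk n hmn) (not_le.mpr (lt_of_le_of_lt (le_max_left _ _) hn))
    · exact absurd (hc ⟨⟨n, hmn⟩, rfl⟩) (not_le.mpr (lt_of_le_of_lt (le_max_right _ _) hn))
  choose sel hsel1 hsel2 using key
  set nk : ℕ → ℕ :=
    fun k => Nat.rec (sel 1 3) (fun k ih => sel (ih + 1) (((k : ℝ) + 2) ^ 4)) k with hnkdef
  have hnkS : ∀ k, nk (k + 1) = sel (nk k + 1) (((k : ℝ) + 2) ^ 4) := fun k => rfl
  have hnk1 : ∀ k, 1 ≤ nk k := by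
    intro k
    cases k with
    | zero => exact hsel1 1 3
    | succ k =>
      have := hsel1 (nk k + 1) (((k : ℝ) + 2) ^ 4)
      rw [hnkS]; omega
  have hmono : StrictMono nk := strictMono_nat_of_lt_succ fun k => by
    have := hsel1 (nk k + 1) (((k : ℝ) + 2) ^ 4)
    rw [hnkS]; omega
  have hbig : ∀ k : ℕ, ((k : ℝ) + 1) ^ 4 < v (nk k) := by
    intro k
    cases k with
    | zero =>
      have h := hsel2 1 3
      have e : nk 0 = sel 1 3 := rfl
      rw [e]; push_cast; nlinarith [h]
    | succ k =>
      have h := hsel2 (nk k + 1) (((k : ℝ) + 2) ^ 4)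
      rw [hnkS]
      push_cast
      nlinarith [h]
  set r : ℕ → ℝ := fun k => Real.sqrt (v (nk k)) with hrdef
  have hv0 : ∀ k, 0 ≤ v (nk k) := fun k => le_of_lt (lt_of_le_of_lt (by positivity) (hbig k))
  have hr2 : ∀ k, r k ^ 2 = v (nk k) := fun k => Real.sq_sqrt (hv0 k)
  have hrge : ∀ k : ℕ, ((k : ℝ) + 1) ^ 2 ≤ r k := by
    intro k
    have e : ((k : ℝ) + 1) ^ 2 = Real.sqrt ((((k : ℝ) + 1) ^ 2) ^ 2) :=
      (Real.sqrt_sq (by positivity)).symm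
    rw [e, hrdef]
    apply Real.sqrt_le_sqrt
    nlinarith [hbig k]
  have hrpos : ∀ k, 0 < r k := fun k => lt_of_lt_of_le (by positivity) (hrge k)
  have hrep : ∀ k, ∃ gg ∈ fr.F, φs (nk k) =ᵐ[fr.ν (nk k)] gg :=
    fun k => (hφs (nk k)).2.1 (nk k) (hnk1 k)
  choose gs hgsF hgs using hrep
  set c : ℕ → ℝ := fun k => ((k : ℝ) + 1)⁻¹ * (r k)⁻¹ with hcdef
  set ψ : E → ℝ := fun x => ∑' k, (fr.En (nk k)).indicator (fun y => c k * gs k y) x with hψdef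
  have hψ_on : ∀ k x, x ∈ fr.En (nk k) → ψ x = c k * gs k x := by
    intro k x hx
    have h0 : ∀ j, j ≠ k → (fr.En (nk j)).indicator (fun y => c j * gs j y) x = 0 := by
      intro j hj
      apply Set.indicator_of_notMem
      exact fun hxj =>
        Set.disjoint_left.mp (fr.disjEn (nk j) (nk k) fun hh => hj (hmono.injective hh)) hxj hx
    calc ψ x = (fr.En (nk k)).indicator (fun y => c k * gs k y) x := tsum_eq_single k h0
      _ = c k * gs k x := Set.indicator_of_mem hx _
  have hψ_off : ∀ x, (∀ k, x ∉ fr.En (nk k)) → ψ x = 0 := by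
    intro x hx
    have h0 : ∀ k, (fr.En (nk k)).indicator (fun y => c k * gs k y) x = 0 := fun k =>
      Set.indicator_of_notMem (hx k) _
    calc ψ x = ∑' (_ : ℕ), (0 : ℝ) := tsum_congr h0
      _ = 0 := tsum_zero
  have hcar : ∀ n, ∀ᵐ x ∂fr.ν n, x ∈ fr.En n := by
    intro n
    rw [ae_iff]
    exact fr.nullEn n
  have hψae : ∀ k, ψ =ᵐ[fr.ν (nk k)] fun x => c k * gs k x :=
    fun k => (hcar (nk k)).mono fun x hx => hψ_on k x hx
  have hψae0 : ∀ n, (∀ k, nk k ≠ n) → ψ =ᵐ[fr.ν n] fun _ => (0 : ℝ) := by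
    intro n hn
    refine (hcar n).mono fun x hx => ?_
    refine hψ_off x fun k hxk => ?_
    exact Set.disjoint_left.mp (fr.disjEn (nk k) n (hn k)) hxk hx
  have hψmeas : Measurable ψ := by
    apply measurable_of_tendsto_metrizable
      (f := fun K x => ∑ k ∈ Finset.range K, (fr.En (nk k)).indicator (fun y => c k * gs k y) x)
    · intro K
      exact Finset.measurable_sum _ fun k _ =>
        ((fr.F_measurable _ (hgsF k)).const_mul _).indicator (fr.measEn _)
    · rw [tendsto_pi_nhds]
      intro x
      have hsum : Summable fun k => (fr.En (nk k)).indicator (fun y => c k * gs k y) x := by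
        rcases Classical.em (∃ k, x ∈ fr.En (nk k)) with ⟨k0, hk0⟩ | hno
        · apply summable_of_ne_finset_zero (s := {k0})
          intro j hj
          simp only [Finset.mem_singleton] at hj
          apply Set.indicator_of_notMem
          exact fun hxj =>
            Set.disjoint_left.mp (fr.disjEn (nk j) (nk k0) fun hh => hj (hmono.injective hh))
              hxj hk0
        · apply summable_of_ne_finset_zero (s := (∅ : Finset ℕ))
          intro j _
          exact Set.indicator_of_notMem (fun hxj => hno ⟨j, hxj⟩) _
      exact hsum.hasSum.tendsto_sum_nat
  have hgsM : ∀ k n, MemLp (gs k) 2 (fr.ν n) := fun k => fr.F_memL2 _ (hgsF k)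
  have hψL2 : ∀ n, MemLp ψ 2 (fr.ν n) := by
    intro n
    rcases Classical.em (∃ k, nk k = n) with ⟨k, rfl⟩ | hno
    · exact MemLp.ae_eq (hψae k).symm ((hgsM k (nk k)).const_mul (c k))
    · push_neg at hno
      exact MemLp.ae_eq (hψae0 n hno).symm MemLp.zero'
  have hval : ∀ k : ℕ, ip (fr.ν (nk k)) ψ ψ = (((k : ℝ) + 1)⁻¹) ^ 2 := by
    intro k
    rw [ip_congr_left (hψae k), ip_congr_right (hψae k), ip_smul_l, ip_smul_r,
      ip_congr_left (hgs k).symm, ip_congr_right (hgs k).symm]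
    have e : ip (fr.ν (nk k)) (φs (nk k)) (φs (nk k)) = r k ^ 2 := (hr2 k).symm
    rw [e, hcdef]
    have hrk := hrpos k
    field_simp
  have hval0 : ∀ n, (∀ k, nk k ≠ n) → ip (fr.ν n) ψ ψ = 0 := by
    intro n hn
    rw [ip_congr_left (hψae0 n hn)]
    simp [ip]
  have h00 : ip (fr.ν 0) ψ ψ = 0 :=
    hval0 0 fun k => Nat.one_le_iff_ne_zero.mp (hnk1 k)
  have hψD2 : Tendsto (fun n => ip (fr.ν n) ψ ψ) atTop (𝓝 0) := by
    rw [Metric.tendsto_atTop]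
    intro ε hε
    obtain ⟨K, hK⟩ : ∃ K : ℕ, (((K : ℝ) + 1)⁻¹) ^ 2 < ε := by
      obtain ⟨K, hK⟩ := exists_nat_gt (1 / ε)
      refine ⟨K, ?_⟩
      have hK0 : (0 : ℝ) < (K : ℝ) + 1 := by positivity
      have hKε : 1 < ((K : ℝ) + 1) * ε := by
        have h := (div_lt_iff₀ hε).mp (show 1 / ε < (K : ℝ) + 1 by linarith)
        nlinarith [h]
      have h1 : ((K : ℝ) + 1)⁻¹ < ε := by
        rw [inv_eq_one_div, div_lt_iff₀ hK0]
        nlinarith [hKε]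
      have h2 : (((K : ℝ) + 1)⁻¹) ^ 2 ≤ ((K : ℝ) + 1)⁻¹ := by
        have hle1 : ((K : ℝ) + 1)⁻¹ ≤ 1 := by
          rw [inv_eq_one_div, div_le_one hK0]; linarith
        nlinarith [inv_nonneg.mpr (le_of_lt hK0)]
      linarith
    refine ⟨nk K + 1, fun n hn => ?_⟩
    rw [Real.dist_eq, sub_zero]
    rcases Classical.em (∃ k, nk k = n) with ⟨k, rfl⟩ | hno
    · rw [hval k, abs_of_nonneg (by positivity)]
      have hkK : K < k := by
        by_contra hkK
        push_neg at hkK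
        have := hmono.monotone hkK
        omega
      have hle : ((k : ℝ) + 1)⁻¹ ≤ ((K : ℝ) + 1)⁻¹ := by
        apply inv_anti₀ (by positivity)
        have : (K : ℝ) ≤ (k : ℝ) := Nat.cast_le.mpr hkK.le
        linarith
      calc (((k : ℝ) + 1)⁻¹) ^ 2 ≤ (((K : ℝ) + 1)⁻¹) ^ 2 :=
            pow_le_pow_left₀ (by positivity) hle 2
        _ < ε := hK
    · rw [hval0 n fun k hk => hno ⟨k, hk⟩, abs_zero]
      exact hε
  have hψC : ψ ∈ fr.C := by
    refine ⟨⟨hψmeas, hψL2, by rw [h00]; exact hψD2⟩, ?_, ?_⟩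
    · intro n hn
      rcases Classical.em (∃ k, nk k = n) with ⟨k, rfl⟩ | hno
      · refine ⟨fun x => c k * gs k x + 0 * gs k x,
          fr.F_linear _ (hgsF k) _ (hgsF k) (c k) 0, ?_⟩
        have efun : (fun x => c k * gs k x + 0 * gs k x) = fun x => c k * gs k x :=
          funext fun x => by ring
        rw [efun]
        exact hψae k
      · push_neg at hno
        refine ⟨fun x => 0 * gs 0 x + 0 * gs 0 x,
          fr.F_linear _ (hgsF 0) _ (hgsF 0) 0 0, ?_⟩
        have efun : (fun x => 0 * gs 0 x + 0 * gs 0 x) = fun _ : E => (0 : ℝ) :=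
          funext fun x => by ring
        rw [efun]
        exact hψae0 n hno
    · intro χ hχ
      have h00χ : ip (fr.ν 0) ψ χ = 0 := by
        rw [ip_congr_left (hψae0 0 fun k => Nat.one_le_iff_ne_zero.mp (hnk1 k))]
        simp [ip]
      rw [h00χ]
      obtain ⟨Bχ, hBχ⟩ := bdd_of_tendsto (fr.F_tendsto χ hχ)
      apply squeeze_zero_norm
        (a := fun n => Real.sqrt (ip (fr.ν n) ψ ψ) * Real.sqrt (max Bχ 0))
      · intro n
        refine le_trans (abs_ip_le (hψL2 n) (fr.F_memL2 χ hχ n)) ?_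
        exact mul_le_mul_of_nonneg_left
          (Real.sqrt_le_sqrt (le_trans (hBχ n) (le_max_left _ _))) (Real.sqrt_nonneg _)
      · have hs : Tendsto (fun n => Real.sqrt (ip (fr.ν n) ψ ψ)) atTop (𝓝 0) := by
          have := hψD2.sqrt
          simpa using this
        simpa using hs.mul_const (Real.sqrt (max Bχ 0))
  have hlim := hw ψ hψC
  have hsub := hlim.comp hmono.tendsto_atTop
  have hvals : ∀ k : ℕ, (k : ℝ) + 1 ≤ ip (fr.ν (nk k)) (φs (nk k)) ψ := by
    intro k
    have e : ip (fr.ν (nk k)) (φs (nk k)) ψ = c k * v (nk k) := by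
      rw [ip_congr_right (hψae k), ip_smul_r, ip_congr_right (hgs k).symm]
    rw [e]
    have e2 : c k * v (nk k) = ((k : ℝ) + 1)⁻¹ * r k := by
      rw [hcdef, ← hr2 k]
      have hrk := hrpos k
      field_simp
    rw [e2]
    have h2 : ((k : ℝ) + 1)⁻¹ * (((k : ℝ) + 1) ^ 2) ≤ ((k : ℝ) + 1)⁻¹ * r k :=
      mul_le_mul_of_nonneg_left (hrge k) (by positivity)
    have h3 : ((k : ℝ) + 1)⁻¹ * (((k : ℝ) + 1) ^ 2) = (k : ℝ) + 1 := by
      field_simp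
    linarith
  have htop : Tendsto (fun k => ip (fr.ν (nk k)) (φs (nk k)) ψ) atTop atTop := by
    refine tendsto_atTop_mono hvals ?_
    exact tendsto_atTop_add_const_right _ 1 tendsto_natCast_atTop_atTop
  exact not_tendsto_nhds_of_tendsto_atTop htop _ hsub

lemma abs_comb_le {q x y r t cq cx cy cr : ℝ} (hq : |q| ≤ cq) (hx : |x| ≤ cx)
    (hy : |y| ≤ cy) (hr : |r| ≤ cr) :
    |q * t ^ 2 + x * t + y * t + r| ≤ cq * t ^ 2 + cx * |t| + cy * |t| + cr := by
  have e1 : |q * t ^ 2| = |q| * t ^ 2 := by rw [abs_mul, abs_of_nonneg (sq_nonneg t)]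
  have e2 : |x * t| = |x| * |t| := abs_mul x t
  have e3 : |y * t| = |y| * |t| := abs_mul y t
  have i1 := abs_add_le (q * t ^ 2) (x * t)
  have i2 := abs_add_le (q * t ^ 2 + x * t) (y * t)
  have i3 := abs_add_le (q * t ^ 2 + x * t + y * t) r
  have m1 : |q| * t ^ 2 ≤ cq * t ^ 2 := mul_le_mul_of_nonneg_right hq (sq_nonneg t)
  have m2 : |x| * |t| ≤ cx * |t| := mul_le_mul_of_nonneg_right hx (abs_nonneg t)
  have m3 : |y| * |t| ≤ cy * |t| := mul_le_mul_of_nonneg_right hy (abs_nonneg t)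
  linarith [e1 ▸ m1, e2 ▸ m2, e3 ▸ m3]

end FrameLemmas
/-- Lemma 2.6: if the forms `S n` pre-converge to `S`, then condition (iv)
implies condition (iii). -/
theorem condIV_implies_condIII (fr : Frame E) (sg : ∀ n, Semigroup2 (fr.ν n))
    (hcontr : ∀ n, (sg n).IsContraction)
    (hpre : PreConv fr sg) (h4 : CondIV fr sg) : CondIII fr sg := by
  intro β hβ u hum huL2 huD us hus hwex hMu0 hH ψ hψm hψL2 hψD ψs hψs hψS hMψ0 hlimsup
  obtain ⟨Mu, hMu⟩ := hMu0
  obtain ⟨Mψ, hMψ⟩ := hMψ0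
  have husC : ∀ n, us n ∈ fr.C := fun n => (hus n).1
  have husD : ∀ n, (sg n).memD (us n) := fun n => (hus n).2.1
  have husM : ∀ n m, MemLp (us n) 2 (fr.ν m) := fun n m => (husC n).1.2.1 m
  have hψsC : ∀ n, ψs n ∈ fr.C := fun n => (hψs n).1
  have hψsD : ∀ n, (sg n).memD (ψs n) := fun n => (hψs n).2
  have hψsM : ∀ n m, MemLp (ψs n) 2 (fr.ν m) := fun n m => (hψsC n).1.2.1 m
  -- Step 1: the sequence (β uₙ - Aₙ uₙ) w-converges to β u - A u.
  have hfwW : fr.WConv (fun n x => β * us n x - (sg n).Af (us n) x)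
      (fun x => β * u x - (sg 0).Af u x) := by
    intro χ hχ
    have h1 := hH χ hχ (fun _ => χ) (fun _ => hχ) (constS fr hχ)
    have e : ∀ n, (sg n).Sb β (us n) χ
        = ip (fr.ν n) (fun x => β * us n x - (sg n).Af (us n) x) χ :=
      fun n => (sg n).Sb_eq_ip (husM n n) (hχ.1.2.1 n) β
    have e0 : (sg 0).Sb β u χ = ip (fr.ν 0) (fun x => β * u x - (sg 0).Af u x) χ :=
      (sg 0).Sb_eq_ip huL2 (hχ.1.2.1 0) β
    rw [← e0]
    exact h1.congr e
  -- Step 2: condition (iv) gives w-convergence of uₙ to u.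
  have huW : fr.WConv us u := h4 β hβ u hum huL2 huD us hus hwex ⟨Mu, hMu⟩ hfwW
  -- Bounds.
  obtain ⟨Bu0, hBu0⟩ := bddW fr husC huW
  obtain ⟨Bu, hBu, hBupos⟩ : ∃ B : ℝ, (∀ n, ip (fr.ν n) (us n) (us n) ≤ B) ∧ (0:ℝ) ≤ B :=
    ⟨max Bu0 0, fun n => le_trans (hBu0 n) (le_max_left _ _), le_max_right _ _⟩
  obtain ⟨Bψ0, hBψ0⟩ := bdd_of_tendsto hψS.2
  obtain ⟨Bψ, hBψ, hBψpos⟩ : ∃ B : ℝ, (∀ n, ip (fr.ν n) (ψs n) (ψs n) ≤ B) ∧ (0:ℝ) ≤ B :=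
    ⟨max Bψ0 0, fun n => le_trans (hBψ0 n) (le_max_left _ _), le_max_right _ _⟩
  obtain ⟨Mu', hMu', hMu'pos⟩ :
      ∃ B : ℝ, (∀ n, ip (fr.ν n) ((sg n).Af (us n)) ((sg n).Af (us n)) ≤ B) ∧ (0:ℝ) ≤ B :=
    ⟨max Mu 0, fun n => le_trans (hMu n) (le_max_left _ _), le_max_right _ _⟩
  obtain ⟨Mψ', hMψ', hMψ'pos⟩ :
      ∃ B : ℝ, (∀ n, ip (fr.ν n) ((sg n).Af (ψs n)) ((sg n).Af (ψs n)) ≤ B) ∧ (0:ℝ) ≤ B :=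
    ⟨max Mψ 0, fun n => le_trans (hMψ n) (le_max_left _ _), le_max_right _ _⟩
  -- Generic bound on form values.
  have habsS : ∀ (n : ℕ) (p q : E → ℝ) (Cp Cq : ℝ), MemLp q 2 (fr.ν n) →
      ip (fr.ν n) ((sg n).Af p) ((sg n).Af p) ≤ Cp → ip (fr.ν n) q q ≤ Cq →
      |(sg n).S p q| ≤ Real.sqrt Cp * Real.sqrt Cq := by
    intro n p q Cp Cq hq hCp hCq
    rw [(sg n).S_eq_neg_ip, abs_neg]
    refine le_trans (abs_ip_le ((sg n).memℒp_Af p) hq) ?_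
    exact mul_le_mul (Real.sqrt_le_sqrt hCp) (Real.sqrt_le_sqrt hCq)
      (Real.sqrt_nonneg _) (Real.sqrt_nonneg _)
  have hQb : ∀ n, |(sg n).S (ψs n) (ψs n)| ≤ Real.sqrt Mψ' * Real.sqrt Bψ :=
    fun n => habsS n (ψs n) (ψs n) _ _ (hψsM n n) (hMψ' n) (hBψ n)
  have hXb : ∀ n, |(sg n).S (ψs n) (us n)| ≤ Real.sqrt Mψ' * Real.sqrt Bu :=
    fun n => habsS n (ψs n) (us n) _ _ (husM n n) (hMψ' n) (hBu n)
  have hYb : ∀ n, |(sg n).S (us n) (ψs n)| ≤ Real.sqrt Mu' * Real.sqrt Bψ :=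
    fun n => habsS n (us n) (ψs n) _ _ (hψsM n n) (hMu' n) (hBψ n)
  have hRb : ∀ n, |(sg n).S (us n) (us n)| ≤ Real.sqrt Mu' * Real.sqrt Bu :=
    fun n => habsS n (us n) (us n) _ _ (husM n n) (hMu' n) (hBu n)
  -- Pairing: ⟨uₙ, ψₙ⟩ₙ → ⟨u, ψ⟩.
  have P1 : Tendsto (fun n => ip (fr.ν n) (us n) (ψs n)) atTop (𝓝 (ip (fr.ν 0) u ψ)) :=
    pairGen fr (fun n => husM n n) hBu huL2 hψm hψL2 (fun n => hψsM n n)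
      (fun χ hχ => huW χ (F_sub_C fr hχ))
      (fun χ hχ => sub_self_tendsto fr (fun n => hψsM n n) hψL2 hχ hψS.2
        (hψS.1 χ (F_sub_C fr hχ)))
  -- w-convergence of Aₙ uₙ to A u.
  have hAfW : ∀ χ ∈ fr.C, Tendsto (fun n => ip (fr.ν n) ((sg n).Af (us n)) χ) atTop
      (𝓝 (ip (fr.ν 0) ((sg 0).Af u) χ)) := by
    intro χ hχ
    have e : ∀ n, ip (fr.ν n) ((sg n).Af (us n)) χ
        = β * ip (fr.ν n) (us n) χ
          - ip (fr.ν n) (fun x => β * us n x - (sg n).Af (us n) x) χ := by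
      intro n
      rw [ip_sub_l ((husM n n).const_mul β) ((sg n).memℒp_Af (us n)) (hχ.1.2.1 n), ip_smul_l]
      ring
    have e0 : ip (fr.ν 0) ((sg 0).Af u) χ
        = β * ip (fr.ν 0) u χ - ip (fr.ν 0) (fun x => β * u x - (sg 0).Af u x) χ := by
      rw [ip_sub_l (huL2.const_mul β) ((sg 0).memℒp_Af u) (hχ.1.2.1 0), ip_smul_l]
      ring
    rw [e0]
    exact (Tendsto.sub ((huW χ hχ).const_mul β) (hfwW χ hχ)).congr fun n => (e n).symm
  -- Pairing: ⟨Aₙ uₙ, ψₙ⟩ₙ → ⟨A u, ψ⟩.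
  have P2 : Tendsto (fun n => ip (fr.ν n) ((sg n).Af (us n)) (ψs n)) atTop
      (𝓝 (ip (fr.ν 0) ((sg 0).Af u) ψ)) :=
    pairGen fr (fun n => (sg n).memℒp_Af (us n)) hMu' ((sg 0).memℒp_Af u) hψm hψL2
      (fun n => hψsM n n) (fun χ hχ => hAfW χ (F_sub_C fr hχ))
      (fun χ hχ => sub_self_tendsto fr (fun n => hψsM n n) hψL2 hχ hψS.2
        (hψS.1 χ (F_sub_C fr hχ)))
  -- Sₙ(uₙ, ψₙ) → S(u, ψ).
  have hY : Tendsto (fun n => (sg n).S (us n) (ψs n)) atTop (𝓝 ((sg 0).S u ψ)) := by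
    rw [show (sg 0).S u ψ = -ip (fr.ν 0) ((sg 0).Af u) ψ from (sg 0).S_eq_neg_ip]
    exact P2.neg.congr fun n => ((sg n).S_eq_neg_ip).symm
  -- Sₙ(ψₙ, ψₙ) → S(ψ, ψ).
  have hliminfQ := (hpre.1 ψ hψm hψL2 id strictMono_id ψs
      (fun k => ⟨hψsC k, hψsD k⟩) (fun χ hχ => hψS.1 χ hχ) ⟨Mψ, fun k => hMψ k⟩).2
  simp only [id_eq] at hliminfQ
  have hQ : Tendsto (fun n => (sg n).S (ψs n) (ψs n)) atTop (𝓝 ((sg 0).S ψ ψ)) := by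
    refine tendsto_of_le_liminf_of_limsup_le hliminfQ hlimsup ?_ ?_
    · exact isBoundedUnder_of ⟨Real.sqrt Mψ' * Real.sqrt Bψ,
        fun n => (abs_le.mp (hQb n)).2⟩
    · exact isBoundedUnder_of ⟨-(Real.sqrt Mψ' * Real.sqrt Bψ),
        fun n => (abs_le.mp (hQb n)).1⟩
  -- The lower-semicontinuity inequality applied to t ψₙ + uₙ.
  have hexp : ∀ (t : ℝ) (k : ℕ),
      (sg k).S (fun x => t * ψs k x + us k x) (fun x => t * ψs k x + us k x)
      = (sg k).S (ψs k) (ψs k) * t ^ 2 + (sg k).S (ψs k) (us k) * t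
        + (sg k).S (us k) (ψs k) * t + (sg k).S (us k) (us k) := by
    intro t k
    have hae := (sg k).Af_comb (hψsM k k) (husM k k) (hψsD k) (husD k) t
    have hcomb : MemLp (fun x => t * ψs k x + us k x) 2 (fr.ν k) :=
      ((hψsM k k).const_mul t).add (husM k k)
    simp only [Semigroup2.S_eq_neg_ip]
    rw [ip_congr_left hae,
      ip_smul_add_l ((sg k).memℒp_Af (ψs k)) ((sg k).memℒp_Af (us k)) hcomb t,
      ip_smul_add_r (hψsM k k) (husM k k) ((sg k).memℒp_Af (ψs k)) t,
      ip_smul_add_r (hψsM k k) (husM k k) ((sg k).memℒp_Af (us k)) t]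
    ring
  have hexp0 : ∀ t : ℝ,
      (sg 0).S (fun x => t * ψ x + u x) (fun x => t * ψ x + u x)
      = (sg 0).S ψ ψ * t ^ 2 + (sg 0).S ψ u * t + (sg 0).S u ψ * t + (sg 0).S u u := by
    intro t
    have hae := (sg 0).Af_comb hψL2 huL2 hψD huD t
    have hcomb : MemLp (fun x => t * ψ x + u x) 2 (fr.ν 0) := (hψL2.const_mul t).add huL2
    simp only [Semigroup2.S_eq_neg_ip]
    rw [ip_congr_left hae,
      ip_smul_add_l ((sg 0).memℒp_Af ψ) ((sg 0).memℒp_Af u) hcomb t,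
      ip_smul_add_r hψL2 huL2 ((sg 0).memℒp_Af ψ) t,
      ip_smul_add_r hψL2 huL2 ((sg 0).memℒp_Af u) t]
    ring
  have hkey : ∀ t : ℝ,
      (sg 0).S (fun x => t * ψ x + u x) (fun x => t * ψ x + u x) ≤
      liminf (fun k => (sg k).S (fun x => t * ψs k x + us k x)
        (fun x => t * ψs k x + us k x)) atTop := by
    intro t
    have hφtm : Measurable (fun x => t * ψ x + u x) := (hψm.const_mul t).add hum
    have hφtL2 : MemLp (fun x => t * ψ x + u x) 2 (fr.ν 0) := (hψL2.const_mul t).add huL2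
    have hφtkC : ∀ k, (fun x => t * ψs k x + us k x) ∈ fr.C ∧
        (sg k).memD (fun x => t * ψs k x + us k x) :=
      fun k => ⟨C_comb fr (hψsC k) (husC k) t,
        (sg k).memD_comb (hψsM k k) (husM k k) (hψsD k) (husD k) t⟩
    have hφtW : ∀ χ ∈ fr.C, Tendsto (fun k => ip (fr.ν k) (fun x => t * ψs k x + us k x) χ)
        atTop (𝓝 (ip (fr.ν 0) (fun x => t * ψ x + u x) χ)) := by
      intro χ hχ
      have e : ∀ k, ip (fr.ν k) (fun x => t * ψs k x + us k x) χ
          = t * ip (fr.ν k) (ψs k) χ + ip (fr.ν k) (us k) χ :=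
        fun k => ip_smul_add_l (hψsM k k) (husM k k) (hχ.1.2.1 k) t
      rw [ip_smul_add_l hψL2 huL2 (hχ.1.2.1 0) t]
      exact (((hψS.1 χ hχ).const_mul t).add (huW χ hχ)).congr fun k => (e k).symm
    have hbdk : ∀ k, ip (fr.ν k) ((sg k).Af fun x => t * ψs k x + us k x)
        ((sg k).Af fun x => t * ψs k x + us k x)
        ≤ (|t| * Real.sqrt Mψ' + Real.sqrt Mu') ^ 2 := by
      intro k
      have hae := (sg k).Af_comb (hψsM k k) (husM k k) (hψsD k) (husD k) t
      rw [ip_congr_left hae, ip_congr_right hae,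
        ip_smul_add_self ((sg k).memℒp_Af (ψs k)) ((sg k).memℒp_Af (us k)) t]
      have c1 := hMψ' k
      have c2 := hMu' k
      have c3 : |ip (fr.ν k) ((sg k).Af (ψs k)) ((sg k).Af (us k))|
          ≤ Real.sqrt Mψ' * Real.sqrt Mu' := by
        refine le_trans (abs_ip_le ((sg k).memℒp_Af (ψs k)) ((sg k).memℒp_Af (us k))) ?_
        exact mul_le_mul (Real.sqrt_le_sqrt c1) (Real.sqrt_le_sqrt c2)
          (Real.sqrt_nonneg _) (Real.sqrt_nonneg _)
      have h4 : 2 * t * ip (fr.ν k) ((sg k).Af (ψs k)) ((sg k).Af (us k))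
          ≤ 2 * (|t| * (Real.sqrt Mψ' * Real.sqrt Mu')) := by
        have h5 : t * ip (fr.ν k) ((sg k).Af (ψs k)) ((sg k).Af (us k))
            ≤ |t * ip (fr.ν k) ((sg k).Af (ψs k)) ((sg k).Af (us k))| := le_abs_self _
        rw [abs_mul] at h5
        have h6 : |t| * |ip (fr.ν k) ((sg k).Af (ψs k)) ((sg k).Af (us k))|
            ≤ |t| * (Real.sqrt Mψ' * Real.sqrt Mu') :=
          mul_le_mul_of_nonneg_left c3 (abs_nonneg t)
        linarith
      have h5 : t ^ 2 * ip (fr.ν k) ((sg k).Af (ψs k)) ((sg k).Af (ψs k)) ≤ t ^ 2 * Mψ' :=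
        mul_le_mul_of_nonneg_left c1 (sq_nonneg t)
      have expand : (|t| * Real.sqrt Mψ' + Real.sqrt Mu') ^ 2
          = t ^ 2 * Mψ' + 2 * (|t| * (Real.sqrt Mψ' * Real.sqrt Mu')) + Mu' := by
        rw [add_sq, mul_pow, sq_abs, Real.sq_sqrt hMψ'pos, Real.sq_sqrt hMu'pos]
        ring
      rw [expand]
      linarith
    exact (hpre.1 _ hφtm hφtL2 id strictMono_id _ hφtkC hφtW
      ⟨(|t| * Real.sqrt Mψ' + Real.sqrt Mu') ^ 2, hbdk⟩).2
  -- Eventual lower bound from the liminf inequality, in expanded form.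
  have hev : ∀ t : ℝ, ∀ᶠ k in atTop,
      (sg 0).S ψ ψ * t ^ 2 + (sg 0).S ψ u * t + (sg 0).S u ψ * t + (sg 0).S u u - 1 <
      (sg k).S (ψs k) (ψs k) * t ^ 2 + (sg k).S (ψs k) (us k) * t
        + (sg k).S (us k) (ψs k) * t + (sg k).S (us k) (us k) := by
    intro t
    have hlt : (sg 0).S (fun x => t * ψ x + u x) (fun x => t * ψ x + u x) - 1 <
        liminf (fun k => (sg k).S (fun x => t * ψs k x + us k x)
          (fun x => t * ψs k x + us k x)) atTop := by
      have := hkey t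
      linarith
    have hbdd : IsBoundedUnder (· ≥ ·) atTop
        (fun k => (sg k).S (fun x => t * ψs k x + us k x) (fun x => t * ψs k x + us k x)) := by
      refine isBoundedUnder_of ⟨-(Real.sqrt Mψ' * Real.sqrt Bψ * t ^ 2
        + Real.sqrt Mψ' * Real.sqrt Bu * |t| + Real.sqrt Mu' * Real.sqrt Bψ * |t|
        + Real.sqrt Mu' * Real.sqrt Bu), fun k => ?_⟩
      have hb := abs_comb_le (hQb k) (hXb k) (hYb k) (hRb k) (t := t)
      rw [hexp t k]
      linarith [(abs_le.mp hb).1]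
    have h := eventually_lt_of_lt_liminf hlt hbdd
    refine h.mono fun k hk => ?_
    rw [hexp0 t, hexp t k] at hk
    exact hk
  -- Convergence of X k := Sₖ(ψₖ, uₖ) to S(ψ, u).
  have hX : Tendsto (fun n => (sg n).S (ψs n) (us n)) atTop (𝓝 ((sg 0).S ψ u)) := by
    rw [Metric.tendsto_nhds]
    intro ε hε
    obtain ⟨CR, hRb', hCRpos⟩ :
        ∃ CR : ℝ, (∀ n, |(sg n).S (us n) (us n)| ≤ CR) ∧ (0:ℝ) ≤ CR :=
      ⟨Real.sqrt Mu' * Real.sqrt Bu, hRb, by positivity⟩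
    obtain ⟨C0, hC0⟩ : ∃ C0 : ℝ, C0 = |(sg 0).S u u| + CR + 3 := ⟨_, rfl⟩
    have hC0pos : (0:ℝ) < C0 := by rw [hC0]; positivity
    obtain ⟨T, hTpos, hCT⟩ : ∃ T : ℝ, 0 < T ∧ C0 / T < ε := by
      refine ⟨C0 / ε + 1, by positivity, ?_⟩
      rw [div_lt_iff₀ (by positivity)]
      have e : ε * (C0 / ε) = C0 := by field_simp
      rw [mul_add, mul_one, e]
      linarith
    have hT2pos : (0:ℝ) < T ^ 2 := by positivity
    have evQ := Metric.tendsto_nhds.mp hQ (1 / T ^ 2) (by positivity)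
    have evY := Metric.tendsto_nhds.mp hY (1 / T) (by positivity)
    filter_upwards [hev T, hev (-T), evQ, evY] with k e1 e2 eq ey
    rw [Real.dist_eq] at eq ey
    have conv : ∀ a b c d : ℝ, a * (-T) ^ 2 + b * (-T) + c * (-T) + d
        = a * T ^ 2 - b * T - c * T + d := fun a b c d => by ring
    rw [conv, conv] at e2
    have hq1 : ((sg k).S (ψs k) (ψs k) - (sg 0).S ψ ψ) * T ^ 2 < 1 := by
      rw [← lt_div_iff₀ hT2pos]
      exact lt_of_le_of_lt (le_abs_self _) eq
    have hq2 : ((sg 0).S ψ ψ - (sg k).S (ψs k) (ψs k)) * T ^ 2 < 1 := by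
      rw [← lt_div_iff₀ hT2pos]
      have := neg_abs_le ((sg k).S (ψs k) (ψs k) - (sg 0).S ψ ψ)
      linarith
    have hy1 : ((sg k).S (us k) (ψs k) - (sg 0).S u ψ) * T < 1 := by
      rw [← lt_div_iff₀ hTpos]
      exact lt_of_le_of_lt (le_abs_self _) ey
    have hy2 : ((sg 0).S u ψ - (sg k).S (us k) (ψs k)) * T < 1 := by
      rw [← lt_div_iff₀ hTpos]
      have := neg_abs_le ((sg k).S (us k) (ψs k) - (sg 0).S u ψ)
      linarith
    have hr1 : (sg k).S (us k) (us k) ≤ CR := (abs_le.mp (hRb' k)).2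
    have hr2 : -CR ≤ (sg k).S (us k) (us k) := (abs_le.mp (hRb' k)).1
    have hr3 : (sg 0).S u u ≤ |(sg 0).S u u| := le_abs_self _
    have hr4 : -|(sg 0).S u u| ≤ (sg 0).S u u := neg_abs_le _
    have hl2 : (sg 0).S ψ u - (sg k).S (ψs k) (us k) < C0 / T := by
      rw [lt_div_iff₀ hTpos]
      linarith [e1, hq1, hy1]
    have hh2 : (sg k).S (ψs k) (us k) - (sg 0).S ψ u < C0 / T := by
      rw [lt_div_iff₀ hTpos]
      linarith [e2, hq1, hy2]
    rw [Real.dist_eq, abs_sub_lt_iff]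
    constructor <;> linarith
  -- Final assembly.
  simp only [Semigroup2.Sb]
  have hβpart : Tendsto (fun n => ip (fr.ν n) (ψs n) (us n)) atTop (𝓝 (ip (fr.ν 0) ψ u)) := by
    rw [show ip (fr.ν 0) ψ u = ip (fr.ν 0) u ψ from ip_comm]
    exact P1.congr fun n => (ip_comm (f := us n) (g := ψs n))
  exact (hβpart.const_mul β).add hX

end Mosco
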